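/- Let F be a finite field, r ≤ m positive integers, and A an r × m matrix over F of rank r which is invariant, i.e. Σ_{j} A i j = 0 for every row i (equivalently, s + a is a solution whenever s is a solution and a ∈ Fⁿ is added to every entry). (i) For every n and every solution s : Fin m → Fⁿ, the affine span of the entries {s j : j ∈ Fin m} has dimension at most m − r − 1; equivalently, the linear span of {s j − s 0 : j ∈ Fin m} has dimension at most m − r − 1. (ii) For every n ≥ m − r − 1 there exists a solution whose entries have affine span of dimension exactly m − r − 1. -/

import Mathlib

open Module Submodule Matrix

set_option maxHeartbeats 1000000
set_option synthInstance.maxHeartbeats 400000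

theorem invariant_solution_affine_span_dimension_bound (F : Type*) [Field F] [Fintype F]
    (r m : ℕ) (hr : 0 < r) (hrm : r ≤ m) (A : Matrix (Fin r) (Fin m) F)
    (hA : A.rank = r) (hinv : ∀ i, ∑ j, A i j = 0) :
    (∀ (n : ℕ) (s : Fin m → (Fin n → F)), (∀ i, ∑ j, A i j • s j = 0) →
        Module.finrank F (Submodule.span F
            (Set.range fun j => s j - s ⟨0, hr.trans_le hrm⟩)) ≤ m - r - 1) ∧
      (∀ n : ℕ, m - r - 1 ≤ n →
        ∃ s : Fin m → (Fin n → F), (∀ i, ∑ j, A i j • s j = 0) ∧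
          Module.finrank F (Submodule.span F
              (Set.range fun j => s j - s ⟨0, hr.trans_le hrm⟩)) = m - r - 1) := by
  classical
  have hm : 0 < m := hr.trans_le hrm
  set j0 : Fin m := ⟨0, hm⟩ with hj0
  set W : Submodule F (Fin m → F) := LinearMap.ker A.mulVecLin with hWdef
  have hone : (fun _ => (1 : F)) ∈ W := by
    simp only [hWdef, LinearMap.mem_ker, Matrix.mulVecLin_apply]
    funext i
    simpa [Matrix.mulVec, dotProduct] using hinv i
  have honene : (fun _ => (1 : F)) ≠ (0 : Fin m → F) := by
    intro h
    exact one_ne_zero (congrFun h j0)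
  have hWdim : finrank F W = m - r := by
    have h := LinearMap.finrank_range_add_finrank_ker A.mulVecLin
    rw [Module.finrank_fin_fun, ← hWdef] at h
    have h2 : finrank F (LinearMap.range A.mulVecLin) = r := hA
    omega
  -- the map w ↦ w - w j0 • 𝟙
  set f : (Fin m → F) →ₗ[F] (Fin m → F) :=
    LinearMap.id - (LinearMap.proj j0).smulRight (fun _ => (1 : F)) with hfdef
  have hf : ∀ w : Fin m → F, ∀ j, f w j = w j - w j0 := by
    intro w j
    simp [hfdef, mul_one]
  set W' : Submodule F (Fin m → F) := Submodule.map f W with hW'def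
  have hW'leW : W' ≤ W := by
    rintro x ⟨w, hw, rfl⟩
    have : f w = w - w j0 • (fun _ => (1 : F)) := by
      funext j; simp [hf, mul_one]
    rw [this]
    exact W.sub_mem hw (W.smul_mem _ hone)
  have hW'zero : ∀ x ∈ W', x j0 = 0 := by
    rintro x ⟨w, _, rfl⟩
    simp [hf]
  have hkerf : LinearMap.ker f = F ∙ (fun _ => (1 : F)) := by
    apply le_antisymm
    · intro w hw
      have hw' : ∀ j, w j - w j0 = 0 := by
        intro j
        have := congrFun (LinearMap.mem_ker.mp hw) j
        rwa [hf] at this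
      have : w = w j0 • (fun _ => (1 : F)) := by
        funext j
        have hj := sub_eq_zero.mp (hw' j)
        simp only [Pi.smul_apply, smul_eq_mul, mul_one]
        exact hj
      rw [this]
      exact Submodule.smul_mem _ _ (Submodule.mem_span_singleton_self _)
    · rw [Submodule.span_singleton_le_iff_mem]
      simp only [LinearMap.mem_ker]
      funext j
      simp [hf]
  have hspanle : (F ∙ (fun _ => (1 : F))) ≤ W := by
    rw [Submodule.span_singleton_le_iff_mem]; exact hone
  have hW'dim : finrank F W' = m - r - 1 := by
    have h := LinearMap.finrank_range_add_finrank_ker (f.comp W.subtype)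
    have hrange : LinearMap.range (f.comp W.subtype) = W' := by
      rw [LinearMap.range_comp, Submodule.range_subtype]
    have hker : LinearMap.ker (f.comp W.subtype) = Submodule.comap W.subtype (F ∙ (fun _ => (1 : F))) := by
      rw [LinearMap.ker_comp, hkerf]
    have hkerdim : finrank F (LinearMap.ker (f.comp W.subtype)) = 1 := by
      rw [hker, (Submodule.comapSubtypeEquivOfLe hspanle).finrank_eq]
      exact finrank_span_singleton honene
    rw [hrange, hkerdim, hWdim] at h
    omega
  constructor
  · intro n s hs
    set B : Matrix (Fin m) (Fin n) F := Matrix.of (fun j k => s j k - s j0 k) with hB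
    have hrange_eq : (Set.range fun j => s j - s j0) = Set.range B := by
      congr 1
    have hcols : ∀ k, Bᵀ k ∈ W' := by
      intro k
      refine ⟨fun j => s j k, ?_, ?_⟩
      · simp only [hWdef, LinearMap.mem_ker, Matrix.mulVecLin_apply]
        funext i
        have := congrFun (hs i) k
        simpa [Matrix.mulVec, dotProduct, Finset.sum_apply] using this
      · funext j
        rw [hf]
        rfl
    calc finrank F (Submodule.span F (Set.range fun j => s j - s j0))
        = B.rank := by rw [hrange_eq, B.rank_eq_finrank_span_row]; rfl
      _ = finrank F (Submodule.span F (Set.range Bᵀ)) := B.rank_eq_finrank_span_cols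
      _ ≤ finrank F W' := by
          apply Submodule.finrank_mono
          rw [Submodule.span_le]
          rintro x ⟨k, rfl⟩
          exact hcols k
      _ = m - r - 1 := hW'dim
  · intro n hn
    set d : ℕ := m - r - 1 with hd
    have b : Basis (Fin d) F W' := Module.finBasisOfFinrankEq F W' hW'dim
    set c : Fin d → (Fin m → F) := fun i => (b i : Fin m → F) with hc
    have hcW' : ∀ i, c i ∈ W' := fun i => (b i).2
    set s : Fin m → (Fin n → F) := fun j k => if h : (k : ℕ) < d then c ⟨k, h⟩ j else 0 with hsdef
    have hs0 : s j0 = 0 := by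
      funext k
      simp only [hsdef]
      split
      · exact hW'zero _ (hcW' _)
      · rfl
    refine ⟨s, ?_, ?_⟩
    · intro i
      funext k
      simp only [Finset.sum_apply, Pi.smul_apply, smul_eq_mul, Pi.zero_apply]
      by_cases h : (k : ℕ) < d
      · have hmem : c ⟨k, h⟩ ∈ W := hW'leW (hcW' _)
        have := congrFun (LinearMap.mem_ker.mp hmem) i
        simp only [Matrix.mulVecLin_apply, Matrix.mulVec, dotProduct, Pi.zero_apply] at this
        simpa [hsdef, h] using this
      · simp [hsdef, h]
    · set B : Matrix (Fin m) (Fin n) F := Matrix.of (fun j k => s j k) with hB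
      have hrange_eq : (Set.range fun j => s j - s j0) = Set.range B := by
        rw [hs0]
        funext j
        simp only [sub_zero]
        rfl
      have hspan_cols : Submodule.span F (Set.range Bᵀ) = Submodule.span F (Set.range c) := by
        apply le_antisymm
        · rw [Submodule.span_le]
          rintro x ⟨k, rfl⟩
          by_cases h : (k : ℕ) < d
          · have : Bᵀ k = c ⟨k, h⟩ := by
              funext j; simp [hB, hsdef, h]
            rw [this]
            exact Submodule.subset_span ⟨_, rfl⟩
          · have : Bᵀ k = 0 := by
              funext j; simp [hB, hsdef, h]
            rw [this]
            exact (Submodule.span F _).zero_mem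
        · rw [Submodule.span_le]
          rintro x ⟨i, rfl⟩
          have hin : (i : ℕ) < n := lt_of_lt_of_le i.2 hn
          have : c i = Bᵀ ⟨i, hin⟩ := by
            funext j
            simp [hB, hsdef, i.2, Fin.eta]
          rw [this]
          exact Submodule.subset_span ⟨_, rfl⟩
      have hcind : LinearIndependent F c := b.linearIndependent.map' W'.subtype (Submodule.ker_subtype W')
      calc finrank F (Submodule.span F (Set.range fun j => s j - s j0))
          = B.rank := by rw [hrange_eq, B.rank_eq_finrank_span_row]; rfl
        _ = finrank F (Submodule.span F (Set.range Bᵀ)) := B.rank_eq_finrank_span_cols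
        _ = finrank F (Submodule.span F (Set.range c)) := by rw [hspan_cols]
        _ = d := by rw [finrank_span_eq_card hcind, Fintype.card_fin]
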